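/- In E-Wythoff, a position (a,b) with a ≤ b has Sprague–Grundy value 1 if and only if (a,b) = (⌊φn⌋ − 1, ⌊φn⌋ + n − 1) for some integer n ≥ 1, where φ = (1+√5)/2. -/

import Mathlib

noncomputable section

/-- The golden ratio. -/
def phi : ℝ := (1 + Real.sqrt 5) / 2


lemma sqrt5_sq : Real.sqrt 5 * Real.sqrt 5 = 5 :=
  Real.mul_self_sqrt (by norm_num)

lemma sqrt5_gt : (2:ℝ) < Real.sqrt 5 := by
  nlinarith [sqrt5_sq, Real.sqrt_nonneg 5]

lemma sqrt5_lt : Real.sqrt 5 < 3 := by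
  nlinarith [sqrt5_sq, Real.sqrt_nonneg 5]

lemma one_lt_phi : 1 < phi := by unfold phi; nlinarith [sqrt5_gt]
lemma phi_lt_two : phi < 2 := by unfold phi; nlinarith [sqrt5_lt]
lemma phi_sq : phi * phi = phi + 1 := by unfold phi; nlinarith [sqrt5_sq]
lemma phi_pos : 0 < phi := lt_trans one_pos one_lt_phi

lemma irrational_phi : Irrational phi := by
  have h := ((Nat.Prime.irrational_sqrt (p := 5) (by norm_num)).natCast_add 1).div_natCast
    (m := 2) (by norm_num)
  unfold phi
  convert h using 2 <;> norm_num

lemma phi_conj : Real.HolderConjugate phi (phi + 1) := by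
  rw [Real.holderConjugate_iff]
  constructor
  · exact one_lt_phi
  · have h1 : phi ≠ 0 := ne_of_gt phi_pos
    have h2 : phi + 1 ≠ 0 := by nlinarith [one_lt_phi]
    field_simp
    nlinarith [phi_sq]

/-- `wA n = ⌊φ n⌋₊`. -/
def wA (n : ℕ) : ℕ := ⌊phi * n⌋₊

lemma wA_int (n : ℕ) : (wA n : ℤ) = beattySeq phi n := by
  unfold beattySeq
  rw [mul_comm]
  exact Int.natCast_floor_eq_floor (mul_nonneg phi_pos.le (Nat.cast_nonneg n))

lemma wA_mono : StrictMono wA := by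
  intro m n h
  have h1 : (wA m : ℝ) ≤ phi * m := Nat.floor_le (mul_nonneg phi_pos.le (Nat.cast_nonneg m))
  have h2 : phi * m + 1 ≤ phi * n := by
    have : (m:ℝ) + 1 ≤ n := by exact_mod_cast h
    nlinarith [one_lt_phi]
  have h3 : ((wA m + 1 : ℕ) : ℝ) ≤ phi * n := by push_cast; linarith
  exact Nat.le_floor h3

lemma wA_ge (n : ℕ) : n ≤ wA n := by
  apply Nat.le_floor
  have : (1:ℝ) * n ≤ phi * n :=
    mul_le_mul_of_nonneg_right (le_of_lt one_lt_phi) (Nat.cast_nonneg n)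
  linarith

lemma wA_one : wA 1 = 1 := by
  unfold wA
  rw [show phi * (1:ℕ) = phi by push_cast; ring, Nat.floor_eq_iff phi_pos.le]
  push_cast
  constructor <;> nlinarith [one_lt_phi, phi_lt_two]

lemma rayleigh :
    symmDiff {x : ℤ | ∃ k > 0, beattySeq phi k = x}
      {x : ℤ | ∃ k > 0, beattySeq (phi + 1) k = x} = {n : ℤ | 0 < n} :=
  Irrational.beattySeq_symmDiff_beattySeq_pos phi_conj irrational_phi

lemma beatty2 (k : ℤ) : beattySeq (phi + 1) k = beattySeq phi k + k := by
  unfold beattySeq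
  rw [show (k:ℝ) * (phi + 1) = k * phi + k by ring, Int.floor_add_intCast]

lemma wA_exists (c : ℕ) (hc : 0 < c) :
    (∃ m, 0 < m ∧ c = wA m) ∨ (∃ m, 0 < m ∧ c = wA m + m) := by
  have h : (c:ℤ) ∈ {n : ℤ | 0 < n} := by
    simp only [Set.mem_setOf_eq]; exact_mod_cast hc
  rw [← rayleigh, Set.mem_symmDiff] at h
  rcases h with ⟨⟨k, hk, hbk⟩, -⟩ | ⟨⟨k, hk, hbk⟩, -⟩
  · left
    refine ⟨k.toNat, by omega, ?_⟩
    have h2 : (wA k.toNat : ℤ) = beattySeq phi k := by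
      rw [wA_int, Int.toNat_of_nonneg (by omega)]
    omega
  · right
    refine ⟨k.toNat, by omega, ?_⟩
    rw [beatty2] at hbk
    have h2 : (wA k.toNat : ℤ) = beattySeq phi k := by
      rw [wA_int, Int.toNat_of_nonneg (by omega)]
    omega

lemma wA_ne (m k : ℕ) (hm : 0 < m) (hk : 0 < k) : wA m ≠ wA k + k := by
  intro h
  have h1 : (wA m : ℤ) ∈ {x : ℤ | ∃ k > 0, beattySeq phi k = x} :=
    ⟨(m:ℤ), by exact_mod_cast hm, (wA_int m).symm⟩
  have h2 : (wA m : ℤ) ∈ {x : ℤ | ∃ k > 0, beattySeq (phi+1) k = x} := by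
    refine ⟨(k:ℤ), by exact_mod_cast hk, ?_⟩
    rw [beatty2, ← wA_int]
    omega
  have h3 : (wA m : ℤ) ∈ {n : ℤ | 0 < n} := by
    have := wA_ge m
    simp only [Set.mem_setOf_eq]
    omega
  rw [← rayleigh, Set.mem_symmDiff] at h3
  tauto

/-- Minimum excluded value of a set of naturals. -/
def mex (S : Set ℕ) : ℕ := sInf {n | n ∉ S}

/-- Sort a pair of naturals into nondecreasing order. -/
def sortPair (p : ℕ × ℕ) : ℕ × ℕ := (min p.1 p.2, max p.1 p.2)

/-- Moves of E-Wythoff (positions are unordered pairs of pile sizes): remove a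
positive number of tokens from one pile, an equal positive number from both
piles, or `k` tokens from the smaller pile and `l` from the larger pile where
`k > l ≥ 0`. -/
def EMove (p q : ℕ × ℕ) : Prop :=
  (∃ t < max p.1 p.2, sortPair q = sortPair (min p.1 p.2, t)) ∨
  (∃ t < min p.1 p.2, sortPair q = sortPair (t, max p.1 p.2)) ∨
  (∃ k, 0 < k ∧ k ≤ min p.1 p.2 ∧ sortPair q = (min p.1 p.2 - k, max p.1 p.2 - k)) ∨
  (∃ k l, l < k ∧ k ≤ min p.1 p.2 ∧ sortPair q = sortPair (min p.1 p.2 - k, max p.1 p.2 - l))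

lemma EMove.sum_lt {p q : ℕ × ℕ} (h : EMove p q) : q.1 + q.2 < p.1 + p.2 := by
  rcases h with ⟨t, ht, hq⟩ | ⟨t, ht, hq⟩ | ⟨k, hk0, hk, hq⟩ | ⟨k, l, hlk, hk, hq⟩ <;>
  · simp only [sortPair, Prod.mk.injEq] at hq
    omega

/-- Sprague–Grundy function of E-Wythoff. -/
noncomputable def grundyE : ℕ × ℕ → ℕ
  | p => mex {v | ∃ q, ∃ _ : EMove p q, grundyE q = v}
termination_by p => p.1 + p.2
decreasing_by exact EMove.sum_lt (by assumption)

/-- P-positions of E-Wythoff. -/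
def EPPos : ℕ × ℕ → Prop
  | p => ∀ q, EMove p q → ¬ EPPos q
termination_by p => p.1 + p.2
decreasing_by exact EMove.sum_lt (by assumption)

lemma grundyE_def (p : ℕ × ℕ) :
    grundyE p = mex {v | ∃ q, EMove p q ∧ grundyE q = v} := by
  rw [grundyE]
  simp only [exists_prop]

lemma sortPair_idem (q : ℕ × ℕ) : sortPair (sortPair q) = sortPair q := by
  unfold sortPair
  simp only [Prod.mk.injEq]
  constructor <;> omega

lemma emove_sorted (p q : ℕ × ℕ) : EMove p (sortPair q) ↔ EMove p q := by
  unfold EMove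
  rw [sortPair_idem]

lemma emove_of_sorted (p q : ℕ × ℕ) : EMove (sortPair p) q ↔ EMove p q := by
  unfold EMove sortPair
  simp only [Prod.mk.injEq]
  constructor <;>
  · rintro (⟨t, ht, hq⟩ | ⟨t, ht, hq⟩ | ⟨k, hk0, hk, hq1, hq2⟩ | ⟨k, l, hlk, hk, hq⟩)
    · exact Or.inl ⟨t, by omega, by constructor <;> omega⟩
    · exact Or.inr (Or.inl ⟨t, by omega, by constructor <;> omega⟩)
    · exact Or.inr (Or.inr (Or.inl ⟨k, by omega, by omega, by constructor <;> omega⟩))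
    · exact Or.inr (Or.inr (Or.inr ⟨k, l, by omega, by omega, by constructor <;> omega⟩))

lemma grundyE_sorted (q : ℕ × ℕ) : grundyE (sortPair q) = grundyE q := by
  rw [grundyE_def, grundyE_def q]
  congr 1
  ext v
  simp only [Set.mem_setOf_eq]
  constructor <;> rintro ⟨r, hm, hv⟩ <;> exact ⟨r, by rw [emove_of_sorted] at *; tauto, hv⟩

lemma emove_iff {a b x y : ℕ} (hab : a ≤ b) (hxy : x ≤ y) :
    EMove (a, b) (x, y) ↔
      (x = a ∧ a ≤ y ∧ y < b) ∨ (y = a ∧ x < a) ∨ (x < a ∧ y ≤ b ∧ b - y ≤ a - x) := by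
  unfold EMove sortPair
  simp only [Prod.mk.injEq]
  constructor
  · rintro (⟨t, ht, hq⟩ | ⟨t, ht, hq⟩ | ⟨k, hk0, hk, hq⟩ | ⟨k, l, hlk, hk, hq⟩) <;> omega
  · rintro (h | h | h)
    · exact Or.inl ⟨y, by omega, by omega, by omega⟩
    · exact Or.inl ⟨x, by omega, by omega, by omega⟩
    · by_cases h3 : b - y = a - x
      · exact Or.inr (Or.inr (Or.inl ⟨a - x, by omega, by omega, by omega, by omega⟩))
      · exact Or.inr (Or.inr (Or.inr ⟨a - x, b - y, by omega, by omega, by omega, by omega⟩))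

lemma grundyE_le_aux : ∀ s (p : ℕ × ℕ), p.1 + p.2 = s → grundyE p ≤ s := by
  intro s
  induction s using Nat.strong_induction_on with
  | _ s IH =>
    intro p hp
    rw [grundyE_def]
    apply Nat.sInf_le
    rintro ⟨q, hm, hv⟩
    have h1 := EMove.sum_lt hm
    have h2 := IH (q.1 + q.2) (by omega) q rfl
    omega

lemma grundyE_le (p : ℕ × ℕ) : grundyE p ≤ p.1 + p.2 :=
  grundyE_le_aux _ p rfl

lemma mex_eq_zero_iff (S : Set ℕ) (hne : ∃ n, n ∉ S) : mex S = 0 ↔ 0 ∉ S := by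
  unfold mex
  constructor
  · intro h
    rcases Nat.sInf_eq_zero.1 h with h0 | h0
    · exact h0
    · exfalso
      obtain ⟨n, hn⟩ := hne
      have : n ∈ {n | n ∉ S} := hn
      rw [h0] at this
      exact this
  · intro h
    exact Nat.sInf_eq_zero.2 (Or.inl h)

lemma mex_eq_one_iff (S : Set ℕ) : mex S = 1 ↔ 0 ∈ S ∧ 1 ∉ S := by
  unfold mex
  constructor
  · intro h
    have hne : {n | n ∉ S}.Nonempty := by
      by_contra hc
      rw [Set.not_nonempty_iff_eq_empty] at hc
      rw [hc] at h
      simp at h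
    have h1 := Nat.sInf_mem hne
    rw [h] at h1
    constructor
    · by_contra h0
      have : sInf {n | n ∉ S} ≤ 0 := Nat.sInf_le h0
      omega
    · exact h1
  · rintro ⟨h0, h1⟩
    have hle : sInf {n | n ∉ S} ≤ 1 := Nat.sInf_le h1
    have hne : sInf {n | n ∉ S} ≠ 0 := by
      intro hc
      rcases Nat.sInf_eq_zero.1 hc with hc' | hc'
      · exact hc' h0
      · have : (1:ℕ) ∈ {n | n ∉ S} := h1
        rw [hc'] at this
        exact this
    omega
/-! ### Combinatorial predicates -/

/-- P-positions (Grundy value 0): `(0,0)` and `(⌊φn⌋, ⌊φn⌋+n)` for `n ≥ 1`. -/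
def InP (a b : ℕ) : Prop := (a = 0 ∧ b = 0) ∨ ∃ n, 0 < n ∧ a = wA n ∧ b = wA n + n

/-- Grundy-value-1 positions: `(⌊φn⌋-1, ⌊φn⌋+n-1)` for `n ≥ 1`. -/
def InQ (a b : ℕ) : Prop := ∃ n, 0 < n ∧ a + 1 = wA n ∧ b + 1 = wA n + n

lemma InQ_zero_one : InQ 0 1 := ⟨1, one_pos, by rw [wA_one], by rw [wA_one]⟩

lemma L1 {a b x y : ℕ} (hP : InP a b)
    (hF : (x = a ∧ a ≤ y ∧ y < b) ∨ (y = a ∧ x < a) ∨ (x < a ∧ y ≤ b ∧ b - y ≤ a - x))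
    (hP' : InP x y) : False := by
  rcases hP with ⟨ha, hb⟩ | ⟨n, hn, ha, hb⟩
  · omega
  rcases hP' with ⟨hx, hy⟩ | ⟨m, hm, hx, hy⟩
  · have := wA_ge n; omega
  · have h1 : wA m < wA n ↔ m < n := wA_mono.lt_iff_lt
    have h2 : wA m = wA n ↔ m = n := wA_mono.injective.eq_iff
    have h3 := wA_ne n m hn hm
    omega

lemma L2 {a b : ℕ} (hab : a ≤ b) (hnP : ¬ InP a b) :
    ∃ x y, x ≤ y ∧
      ((x = a ∧ a ≤ y ∧ y < b) ∨ (y = a ∧ x < a) ∨ (x < a ∧ y ≤ b ∧ b - y ≤ a - x)) ∧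
      InP x y := by
  rcases Nat.eq_zero_or_pos a with ha | ha
  · subst ha
    have hb : b ≠ 0 := fun h => hnP (Or.inl ⟨rfl, h⟩)
    exact ⟨0, 0, le_refl 0, Or.inl ⟨rfl, le_refl 0, by omega⟩, Or.inl ⟨rfl, rfl⟩⟩
  rcases eq_or_lt_of_le hab with heq | hlt
  · exact ⟨0, 0, le_refl 0, Or.inr (Or.inr ⟨by omega, by omega, by omega⟩),
      Or.inl ⟨rfl, rfl⟩⟩
  rcases wA_exists a ha with ⟨m, hm, hma⟩ | ⟨m, hm, hma⟩
  · by_cases hb : wA m + m < b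
    · exact ⟨a, wA m + m, by omega, Or.inl ⟨rfl, by omega, hb⟩, Or.inr ⟨m, hm, hma, rfl⟩⟩
    · have hbne : b ≠ wA m + m := fun h => hnP (Or.inr ⟨m, hm, hma, h⟩)
      have hdm : b - a < m := by omega
      have h1 : wA (b - a) < wA m := wA_mono hdm
      exact ⟨wA (b - a), wA (b - a) + (b - a), by omega,
        Or.inr (Or.inr ⟨by omega, by omega, by omega⟩),
        Or.inr ⟨b - a, by omega, rfl, rfl⟩⟩
  · have h1 : wA m < a := by have := wA_ge m; omega
    exact ⟨wA m, a, by omega, Or.inr (Or.inl ⟨rfl, h1⟩), Or.inr ⟨m, hm, rfl, hma⟩⟩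

lemma L3a {a b : ℕ} (hQ : InQ a b) :
    ∃ x y, x ≤ y ∧
      ((x = a ∧ a ≤ y ∧ y < b) ∨ (y = a ∧ x < a) ∨ (x < a ∧ y ≤ b ∧ b - y ≤ a - x)) ∧
      InP x y := by
  obtain ⟨n, hn, ha, hb⟩ := hQ
  by_cases hn1 : n = 1
  · subst hn1
    rw [wA_one] at ha hb
    exact ⟨0, 0, le_refl 0, Or.inl ⟨by omega, by omega, by omega⟩, Or.inl ⟨rfl, rfl⟩⟩
  · have hge := wA_ge n
    have ha1 : 0 < a := by omega
    rcases wA_exists a ha1 with ⟨m, hm, hma⟩ | ⟨m, hm, hma⟩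
    · have hmn : m < n := by
        have h1 : wA m < wA n ↔ m < n := wA_mono.lt_iff_lt
        omega
      exact ⟨a, wA m + m, by omega, Or.inl ⟨rfl, by omega, by omega⟩,
        Or.inr ⟨m, hm, hma, rfl⟩⟩
    · have h1 : wA m < a := by have := wA_ge m; omega
      exact ⟨wA m, a, by omega, Or.inr (Or.inl ⟨rfl, h1⟩), Or.inr ⟨m, hm, rfl, hma⟩⟩

lemma L3b {a b x y : ℕ} (hQ : InQ a b)
    (hF : (x = a ∧ a ≤ y ∧ y < b) ∨ (y = a ∧ x < a) ∨ (x < a ∧ y ≤ b ∧ b - y ≤ a - x))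
    (hQ' : InQ x y) : False := by
  obtain ⟨n, hn, ha, hb⟩ := hQ
  obtain ⟨m, hm, hx, hy⟩ := hQ'
  have h1 : wA m < wA n ↔ m < n := wA_mono.lt_iff_lt
  have h2 : wA m = wA n ↔ m = n := wA_mono.injective.eq_iff
  have h3 := wA_ne n m hn hm
  omega

lemma PQ_disj {a b : ℕ} (hQ : InQ a b) (hP : InP a b) : False := by
  obtain ⟨n, hn, ha, hb⟩ := hQ
  rcases hP with ⟨h0, h0'⟩ | ⟨k, hk, ha', hb'⟩
  · have := wA_ge n; omega
  · have hkn : k = n := by omega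
    subst hkn
    omega

lemma L4 {a b : ℕ} (hab : a ≤ b) (hnP : ¬ InP a b) (hnQ : ¬ InQ a b) :
    ∃ x y, x ≤ y ∧
      ((x = a ∧ a ≤ y ∧ y < b) ∨ (y = a ∧ x < a) ∨ (x < a ∧ y ≤ b ∧ b - y ≤ a - x)) ∧
      InQ x y := by
  rcases Nat.eq_zero_or_pos a with ha | ha
  · subst ha
    have hb0 : b ≠ 0 := fun h => hnP (Or.inl ⟨rfl, h⟩)
    have hb1 : b ≠ 1 := fun h => hnQ (h ▸ InQ_zero_one)
    exact ⟨0, 1, by omega, Or.inl ⟨rfl, by omega, by omega⟩, InQ_zero_one⟩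
  rcases wA_exists (a + 1) (by omega) with ⟨m, hm, hma⟩ | ⟨m, hm, hma⟩
  · by_cases hb : a + m < b
    · exact ⟨a, a + m, by omega, Or.inl ⟨rfl, by omega, hb⟩, ⟨m, hm, hma, by omega⟩⟩
    by_cases hb2 : b = a + m
    · exact absurd ⟨m, hm, hma, by omega⟩ hnQ
    by_cases hb3 : a = b
    · exact ⟨0, 1, by omega, Or.inr (Or.inr ⟨by omega, by omega, by omega⟩), InQ_zero_one⟩
    · have hdm : b - a < m := by omega
      have h1 : wA (b - a) < wA m := wA_mono hdm
      have h2 := wA_ge (b - a)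
      exact ⟨wA (b - a) - 1, wA (b - a) + (b - a) - 1, by omega,
        Or.inr (Or.inr ⟨by omega, by omega, by omega⟩),
        ⟨b - a, by omega, by omega, by omega⟩⟩
  · have hge := wA_ge m
    exact ⟨wA m - 1, a, by omega, Or.inr (Or.inl ⟨rfl, by omega⟩),
      ⟨m, hm, by omega, by omega⟩⟩

/-! ### Main induction -/

lemma main_grundy : ∀ s a b, a ≤ b → a + b ≤ s →
    (grundyE (a, b) = 0 ↔ InP a b) ∧ (grundyE (a, b) = 1 ↔ InQ a b) := by
  intro s
  induction s using Nat.strong_induction_on with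
  | _ s IH =>
    intro a b hab hs
    have hGdef : grundyE (a, b) = mex {v | ∃ q, EMove (a, b) q ∧ grundyE q = v} :=
      grundyE_def _
    have hne : a + b ∉ {v | ∃ q, EMove (a, b) q ∧ grundyE q = v} := by
      rintro ⟨q, hm, hv⟩
      have h1 : q.1 + q.2 < a + b := EMove.sum_lt hm
      have h2 := grundyE_le q
      omega
    have hmem : ∀ v, v ∈ {v | ∃ q, EMove (a, b) q ∧ grundyE q = v} ↔
        ∃ x y, x ≤ y ∧ EMove (a, b) (x, y) ∧ grundyE (x, y) = v := by
      intro v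
      constructor
      · rintro ⟨q, hm, hv⟩
        refine ⟨(sortPair q).1, (sortPair q).2, min_le_max, ?_, ?_⟩
        · show EMove (a, b) (sortPair q)
          rw [emove_sorted]; exact hm
        · show grundyE (sortPair q) = v
          rw [grundyE_sorted]; exact hv
      · rintro ⟨x, y, hxy, hm, hv⟩
        exact ⟨(x, y), hm, hv⟩
    have h0 : 0 ∈ {v | ∃ q, EMove (a, b) q ∧ grundyE q = v} ↔
        ∃ x y, x ≤ y ∧
          ((x = a ∧ a ≤ y ∧ y < b) ∨ (y = a ∧ x < a) ∨ (x < a ∧ y ≤ b ∧ b - y ≤ a - x)) ∧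
          InP x y := by
      rw [hmem]
      constructor
      · rintro ⟨x, y, hxy, hm, hv⟩
        have hsum : x + y < a + b := EMove.sum_lt hm
        have hIH := (IH (x + y) (by omega) x y hxy (le_refl _)).1
        exact ⟨x, y, hxy, (emove_iff hab hxy).1 hm, hIH.1 hv⟩
      · rintro ⟨x, y, hxy, hf, hp⟩
        have hm := (emove_iff hab hxy).2 hf
        have hsum : x + y < a + b := EMove.sum_lt hm
        have hIH := (IH (x + y) (by omega) x y hxy (le_refl _)).1
        exact ⟨x, y, hxy, hm, hIH.2 hp⟩
    have h1 : 1 ∈ {v | ∃ q, EMove (a, b) q ∧ grundyE q = v} ↔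
        ∃ x y, x ≤ y ∧
          ((x = a ∧ a ≤ y ∧ y < b) ∨ (y = a ∧ x < a) ∨ (x < a ∧ y ≤ b ∧ b - y ≤ a - x)) ∧
          InQ x y := by
      rw [hmem]
      constructor
      · rintro ⟨x, y, hxy, hm, hv⟩
        have hsum : x + y < a + b := EMove.sum_lt hm
        have hIH := (IH (x + y) (by omega) x y hxy (le_refl _)).2
        exact ⟨x, y, hxy, (emove_iff hab hxy).1 hm, hIH.1 hv⟩
      · rintro ⟨x, y, hxy, hf, hq⟩
        have hm := (emove_iff hab hxy).2 hf
        have hsum : x + y < a + b := EMove.sum_lt hm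
        have hIH := (IH (x + y) (by omega) x y hxy (le_refl _)).2
        exact ⟨x, y, hxy, hm, hIH.2 hq⟩
    constructor
    · rw [hGdef, mex_eq_zero_iff _ ⟨a + b, hne⟩, h0]
      constructor
      · intro hno
        by_contra hnP
        exact hno (L2 hab hnP)
      · rintro hp ⟨x, y, hxy, hf, hp'⟩
        exact L1 hp hf hp'
    · rw [hGdef, mex_eq_one_iff, h0, h1]
      constructor
      · rintro ⟨⟨x, y, hxy, hf, hp⟩, hno⟩
        have hnp : ¬ InP a b := fun h => L1 h hf hp
        by_contra hnq
        exact hno (L4 hab hnp hnq)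
      · intro hq
        refine ⟨L3a hq, ?_⟩
        rintro ⟨x, y, hxy, hf, hq'⟩
        exact L3b hq hf hq'

theorem EWythoff_grundy_value_one (a b : ℕ) (hab : a ≤ b) :
    grundyE (a, b) = 1 ↔
      ∃ n : ℕ, 0 < n ∧ (a, b) = (⌊phi * n⌋₊ - 1, ⌊phi * n⌋₊ + n - 1) := by
  rw [(main_grundy (a + b) a b hab (le_refl _)).2]
  constructor
  · rintro ⟨n, hn, h1, h2⟩
    refine ⟨n, hn, ?_⟩
    have h3 := wA_ge n
    unfold wA at h1 h2 h3
    simp only [Prod.mk.injEq]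
    omega
  · rintro ⟨n, hn, heq⟩
    simp only [Prod.mk.injEq] at heq
    have h3 := wA_ge n
    refine ⟨n, hn, ?_, ?_⟩ <;> (unfold wA; unfold wA at h3; omega)

end
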